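/- Let k, t1, t2 be integers with k > t1 > t2 ≥ 2, and let S = {π1, …, πn} be a (k; k−t1, k−t2)-SPID in a finite-dimensional vector space V over a field, with n ≥ 3, ordered so that the sequence (δ_2, …, δ_n) is non-increasing. Suppose π1, …, πm (m ≥ 2) form a (k−t1)-sunflower of maximal dimension with center V', that for some index r > m the subspace π_r does not contain V', and that there exists an index s with m < s < r and δ_s ≤ t2. Then dim⟨S⟩ ≤ k + (n−1)(t1−1) − (t1−t2) + 2. -/

import Mathlib

open Module

variable {F : Type*} [Field F] {V : Type*} [AddCommGroup V] [Module F V]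
  [FiniteDimensional F V]

/-- The subspace `⟨π_1, …, π_j⟩` (1-based), i.e. the span of the `π i` with `(i : ℕ) < j`. -/
def pspan {n : ℕ} (π : Fin n → Submodule F V) (j : ℕ) : Submodule F V :=
  ⨆ i : Fin n, ⨆ _ : (i : ℕ) < j, π i

/-- The 1-based difference sequence `δ_j = dim⟨π_1,…,π_j⟩ - dim⟨π_1,…,π_{j-1}⟩`. -/
noncomputable def delta {n : ℕ} (π : Fin n → Submodule F V) (j : ℕ) : ℕ :=
  finrank F ↥(pspan π j) - finrank F ↥(pspan π (j - 1))

set_option linter.unusedSectionVars false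
set_option linter.unusedVariables false

section PspanAux

variable {n : ℕ}

theorem le_pspan (π : Fin n → Submodule F V) {i : Fin n} {j : ℕ} (h : (i : ℕ) < j) :
    π i ≤ pspan π j :=
  le_iSup_of_le i (le_iSup_of_le h le_rfl)

theorem pspan_le (π : Fin n → Submodule F V) {j : ℕ} {W : Submodule F V}
    (h : ∀ i : Fin n, (i : ℕ) < j → π i ≤ W) : pspan π j ≤ W :=
  iSup_le fun i => iSup_le fun hi => h i hi

theorem pspan_mono (π : Fin n → Submodule F V) {a b : ℕ} (h : a ≤ b) :
    pspan π a ≤ pspan π b :=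
  pspan_le π fun i hi => le_pspan π (lt_of_lt_of_le hi h)

theorem pspan_zero (π : Fin n → Submodule F V) : pspan π 0 = ⊥ := by
  simp [pspan]

theorem pspan_succ (π : Fin n → Submodule F V) {j : ℕ} (h : j < n) :
    pspan π (j + 1) = pspan π j ⊔ π ⟨j, h⟩ := by
  apply le_antisymm
  · refine pspan_le π fun i hi => ?_
    rcases Nat.lt_or_ge (i : ℕ) j with h' | h'
    · exact le_sup_of_le_left (le_pspan π h')
    · have : i = ⟨j, h⟩ := Fin.ext (show (i : ℕ) = j by omega)
      rw [this]; exact le_sup_right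
  · exact sup_le (pspan_mono π (Nat.le_succ j)) (le_pspan π (Nat.lt_succ_self j))

theorem pspan_one (π : Fin n → Submodule F V) (h : 0 < n) :
    pspan π 1 = π ⟨0, h⟩ := by
  rw [show (1 : ℕ) = 0 + 1 from rfl, pspan_succ π h, pspan_zero, bot_sup_eq]

theorem pspan_top (π : Fin n → Submodule F V) : pspan π n = ⨆ i, π i := by
  apply le_antisymm (pspan_le π fun i _ => le_iSup π i)
  exact iSup_le fun i => le_pspan π i.isLt

theorem finrank_pspan_succ (π : Fin n → Submodule F V) {j : ℕ} (h : j < n) :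
    finrank F ↥(pspan π (j + 1)) + finrank F ↥(π ⟨j, h⟩ ⊓ pspan π j) =
      finrank F ↥(pspan π j) + finrank F ↥(π ⟨j, h⟩) := by
  rw [pspan_succ π h, sup_comm, Submodule.finrank_sup_add_finrank_inf_eq, add_comm]

theorem finrank_pspan_mono (π : Fin n → Submodule F V) {a b : ℕ} (h : a ≤ b) :
    finrank F ↥(pspan π a) ≤ finrank F ↥(pspan π b) :=
  Submodule.finrank_mono (pspan_mono π h)

theorem sum_delta (π : Fin n → Submodule F V) (j : ℕ) :
    finrank F ↥(pspan π j) = ∑ i ∈ Finset.range j, delta π (i + 1) := by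
  induction j with
  | zero => simp [pspan_zero]
  | succ j ih =>
    rw [Finset.sum_range_succ, ← ih]
    have h1 : finrank F ↥(pspan π j) ≤ finrank F ↥(pspan π (j + 1)) :=
      finrank_pspan_mono π (Nat.le_succ j)
    have h2 : delta π (j + 1) = finrank F ↥(pspan π (j + 1)) - finrank F ↥(pspan π j) := by
      simp [delta]
    omega

theorem delta_spec (π : Fin n → Submodule F V) {j : ℕ} (h : j < n) :
    delta π (j + 1) + finrank F ↥(π ⟨j, h⟩ ⊓ pspan π j) = finrank F ↥(π ⟨j, h⟩) := by
  have h1 := finrank_pspan_succ π h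
  have h2 : finrank F ↥(pspan π j) ≤ finrank F ↥(pspan π (j + 1)) :=
    finrank_pspan_mono π (Nat.le_succ j)
  have h3 : delta π (j + 1) = finrank F ↥(pspan π (j + 1)) - finrank F ↥(pspan π j) := by
    simp [delta]
  omega

end PspanAux

/-- A `(k; ℓ_1, …, ℓ_v)`-SPID, where `L` is the set of prescribed intersection dimensions:
a family of pairwise distinct `k`-dimensional subspaces, any two distinct members meeting
in a dimension belonging to `L`, and every value of `L` being attained. -/
def IsSPID {n : ℕ} (k : ℕ) (L : Set ℕ) (π : Fin n → Submodule F V) : Prop :=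
  Function.Injective π ∧
  (∀ i, finrank F ↥(π i) = k) ∧
  (∀ i j, i ≠ j → finrank F ↥(π i ⊓ π j) ∈ L) ∧
  ∀ ℓ ∈ L, ∃ i j, i ≠ j ∧ finrank F ↥(π i ⊓ π j) = ℓ

/-- An `ℓ`-junta: all members pass through a common `ℓ`-dimensional subspace. -/
def IsJunta {n : ℕ} (ℓ : ℕ) (π : Fin n → Submodule F V) : Prop :=
  ∃ C : Submodule F V, finrank F ↥C = ℓ ∧ ∀ i, C ≤ π i

/-- `S` contains an `ℓ`-sunflower of maximal dimension with `p` petals (all petals being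
`k`-dimensional): `p` members of `S` pairwise meeting exactly in a common `ℓ`-dimensional
center and spanning a subspace of dimension `ℓ + p(k - ℓ)`. -/
def HasMaxSunflower (k ℓ p : ℕ) (S : Set (Submodule F V)) : Prop :=
  ∃ A : Finset (Submodule F V), ↑A ⊆ S ∧ A.card = p ∧
    ∃ C : Submodule F V, finrank F ↥C = ℓ ∧
      (∀ W ∈ A, ∀ W' ∈ A, W ≠ W' → W ⊓ W' = C) ∧
      finrank F ↥(A.sup id) = ℓ + p * (k - ℓ)

set_option maxHeartbeats 2000000 in
/-- Remark 2.2 (improved bound): with a non-increasing array, a maximal sunflower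
`π_1,…,π_m`, an index `s` with `m < s < r ≤ n` and `δ_s ≤ t₂`, and `π_r` not through
the center, the span has dimension at most `k + (n-1)(t₁-1) - (t₁-t₂) + 2`.
(Indices `r`, `s` are 1-based.) -/
theorem statement5 {n k t1 t2 m r s : ℕ} (h1 : 2 ≤ t2) (h2 : t2 < t1) (h3 : t1 < k)
    (hn : 3 ≤ n) (π : Fin n → Submodule F V) (hS : IsSPID k {k - t1, k - t2} π)
    (hdec : ∀ j, 2 ≤ j → j < n → delta π (j + 1) ≤ delta π j)
    (hm : 2 ≤ m)
    (V' : Submodule F V) (hV' : finrank F ↥V' = k - t1)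
    (hcenter : ∀ i j : Fin n, (i : ℕ) < m → (j : ℕ) < m → i ≠ j → π i ⊓ π j = V')
    (hmax : finrank F ↥(pspan π m) = (k - t1) + m * t1)
    (hms : m < s) (hsr : s < r) (hrn : r ≤ n)
    (hnot : ¬ V' ≤ π ⟨r - 1, by omega⟩)
    (hs : delta π s ≤ t2) :
    (finrank F ↥(⨆ i, π i) : ℤ) ≤
      (k : ℤ) + ((n : ℤ) - 1) * ((t1 : ℤ) - 1) - ((t1 : ℤ) - (t2 : ℤ)) + 2 := by

  obtain ⟨hinj, hdim, hint, -⟩ := hS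
  -- basic facts
  have hlow : ∀ i j : Fin n, i ≠ j → k - t1 ≤ finrank F ↥(π i ⊓ π j) := by
    intro i j hij
    have := hint i j hij
    simp only [Set.mem_insert_iff, Set.mem_singleton_iff] at this
    rcases this with h | h <;> omega
  have h0n : 0 < n := by omega
  -- delta 1 = k
  have hd1 : delta π 1 = k := by
    have := delta_spec π h0n
    rw [pspan_zero, inf_bot_eq] at this
    simpa [hdim, finrank_bot] using this
  -- delta (j+1) ≤ t1 for 1 ≤ j < n
  have hdle : ∀ j : ℕ, 1 ≤ j → (hj : j < n) → delta π (j + 1) ≤ t1 := by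
    intro j h1j hj
    have hsp := delta_spec π hj
    have hne : (⟨j, hj⟩ : Fin n) ≠ ⟨0, h0n⟩ := by
      simp only [ne_eq, Fin.mk.injEq]; omega
    have hle : π ⟨j, hj⟩ ⊓ π ⟨0, h0n⟩ ≤ π ⟨j, hj⟩ ⊓ pspan π j :=
      inf_le_inf le_rfl (le_pspan π (by show 0 < j; omega))
    have := (hlow _ _ hne).trans (Submodule.finrank_mono hle)
    have hk := hdim ⟨j, hj⟩
    omega
  -- antitonicity of delta on [2, n]
  have hanti : ∀ i j : ℕ, 2 ≤ i → i ≤ j → j ≤ n → delta π j ≤ delta π i := by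
    intro i j h2i hij hjn
    induction j, hij using Nat.le_induction with
    | base => exact le_rfl
    | succ j hij ih =>
      exact (hdec j (by omega) (by omega)).trans (ih (by omega))
  -- definition of M
  have hex : ∃ j, m ≤ j ∧ delta π (j + 1) ≤ t1 - 1 := by
    refine ⟨s - 1, by omega, ?_⟩
    rw [show s - 1 + 1 = s by omega]
    omega
  set M := Nat.find hex with hMdef
  obtain ⟨hmM, hdM1⟩ := Nat.find_spec hex
  have hMs : M ≤ s - 1 := by
    apply Nat.find_le
    refine ⟨by omega, ?_⟩
    rw [show s - 1 + 1 = s by omega]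
    omega
  have hMn : M < n := by omega
  have h2M : 2 ≤ M := by omega
  -- delta j = t1 for 2 ≤ j ≤ m, from maximality of the sunflower
  have hsum_m : ∑ i ∈ Finset.range m, delta π (i + 1) = k + (m - 1) * t1 := by
    rw [← sum_delta, hmax]
    obtain ⟨m', rfl⟩ : ∃ m', m = m' + 1 := ⟨m - 1, by omega⟩
    have : (m' + 1) * t1 = m' * t1 + t1 := by ring
    simp only [Nat.add_sub_cancel]
    omega
  have hsplit_m : ∑ i ∈ Finset.range m, delta π (i + 1)
      = delta π 1 + ∑ i ∈ Finset.Ico 1 m, delta π (i + 1) := by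
    rw [Finset.range_eq_Ico, ← Finset.sum_Ico_consecutive _ (Nat.zero_le 1) (by omega : 1 ≤ m)]
    congr 1
  have hdel_m : ∀ j : ℕ, 2 ≤ j → j ≤ m → delta π j = t1 := by
    intro j h2j hjm
    by_contra hne
    have hjlt : delta π j < t1 := by
      have := hdle (j - 1) (by omega) (by omega)
      rw [show j - 1 + 1 = j by omega] at this
      omega
    have hlt : ∑ i ∈ Finset.Ico 1 m, delta π (i + 1) < ∑ _i ∈ Finset.Ico 1 m, t1 := by
      apply Finset.sum_lt_sum
      · intro i hi
        simp only [Finset.mem_Ico] at hi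
        exact hdle i (by omega) (by omega)
      · refine ⟨j - 1, Finset.mem_Ico.mpr ⟨by omega, by omega⟩, ?_⟩
        rw [show j - 1 + 1 = j by omega]
        exact hjlt
    rw [Finset.sum_const, Nat.card_Ico, smul_eq_mul] at hlt
    omega
  -- delta j = t1 for 2 ≤ j ≤ M
  have hdelt1 : ∀ j : ℕ, 2 ≤ j → j ≤ M → delta π j = t1 := by
    intro j h2j hjM
    rcases le_or_gt j m with h | h
    · exact hdel_m j h2j h
    · have hmin := Nat.find_min hex (show j - 1 < M by omega)
      push_neg at hmin
      have h2' := hmin (by omega)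
      rw [show j - 1 + 1 = j by omega] at h2'
      have hle := hdle (j - 1) (by omega) (by omega)
      rw [show j - 1 + 1 = j by omega] at hle
      omega
  -- the structure result: π_j ∩ pspan j = V' for 1 ≤ j < M
  have hE : ∀ jj : ℕ, (hjj : jj < n) → 1 ≤ jj → jj < M →
      π ⟨jj, hjj⟩ ⊓ pspan π jj = V' := by
    intro jj hjj h1 hjM
    rcases eq_or_lt_of_le h1 with h1' | h2
    · -- jj = 1
      have hjj1 : jj = 1 := h1'.symm
      subst hjj1
      rw [pspan_one π h0n]
      exact hcenter ⟨1, hjj⟩ ⟨0, h0n⟩ (by show 1 < m; omega) (by simpa using hm.trans_lt' (by omega)) (by simp [Fin.ext_iff])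
    · -- 2 ≤ jj
      have hd : delta π (jj + 1) = t1 := hdelt1 (jj + 1) (by omega) (by omega)
      have hds := delta_spec π hjj
      rw [hdim] at hds
      have hr : finrank F ↥(π ⟨jj, hjj⟩ ⊓ pspan π jj) = k - t1 := by omega
      have e0 : π ⟨jj, hjj⟩ ⊓ π ⟨0, h0n⟩ = π ⟨jj, hjj⟩ ⊓ pspan π jj := by
        apply Submodule.eq_of_le_of_finrank_le
          (inf_le_inf le_rfl (le_pspan π (by show 0 < jj; omega)))
        rw [hr]
        exact hlow _ _ (by simp only [ne_eq, Fin.mk.injEq]; omega)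
      have h1n : 1 < n := by omega
      have e1 : π ⟨jj, hjj⟩ ⊓ π ⟨1, h1n⟩ = π ⟨jj, hjj⟩ ⊓ pspan π jj := by
        apply Submodule.eq_of_le_of_finrank_le
          (inf_le_inf le_rfl (le_pspan π (by simpa using h2)))
        rw [hr]
        exact hlow _ _ (by simp only [ne_eq, Fin.mk.injEq]; omega)
      have hsub : π ⟨jj, hjj⟩ ⊓ pspan π jj ≤ V' := by
        rw [← hcenter ⟨0, h0n⟩ ⟨1, h1n⟩ (by simpa using hm.trans_lt' (by omega)) (by show 1 < m; omega)
          (by simp [Fin.ext_iff])]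
        exact le_inf (by rw [← e0]; exact inf_le_right) (by rw [← e1]; exact inf_le_right)
      exact Submodule.eq_of_le_of_finrank_le hsub (by rw [hV', hr])
  -- the chain argument
  have hrn' : r - 1 < n := by omega
  set ρ : Fin n := ⟨r - 1, hrn'⟩ with hρ
  set A : Fin n → Submodule F V := fun i => π ρ ⊓ π i with hA
  have hAle : ∀ j : ℕ, pspan A j ≤ π ρ ⊓ pspan π j := by
    intro j
    exact pspan_le A fun i hi => le_inf inf_le_left (inf_le_right.trans (le_pspan π hi))
  have hVr : finrank F ↥(V' ⊓ π ρ) < k - t1 := by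
    rw [← hV']
    apply Submodule.finrank_lt_finrank_of_lt
    exact lt_of_le_of_ne inf_le_left fun h => hnot (inf_eq_left.mp h)
  have hchainstep : ∀ j : ℕ, 1 ≤ j → j ≤ M → (k - t1) + (j - 1) ≤ finrank F ↥(pspan A j) := by
    intro j
    induction j with
    | zero => omega
    | succ j ih =>
      intro h1 hjM
      rcases Nat.eq_or_lt_of_le h1 with h1' | h2
      · -- j + 1 = 1, i.e. j = 0
        have hj0 : j = 0 := by omega
        subst hj0
        rw [pspan_one A h0n]
        have : A ⟨0, h0n⟩ = π ρ ⊓ π ⟨0, h0n⟩ := rfl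
        rw [this]
        have := hlow ρ ⟨0, h0n⟩ (by simp only [hρ, ne_eq, Fin.mk.injEq]; omega)
        omega
      · have hjM' : 1 ≤ j := by omega
        have ihh := ih hjM' (by omega)
        have hjn : j < n := by omega
        have hfr := finrank_pspan_succ A hjn
        have hAj_low : k - t1 ≤ finrank F ↥(A ⟨j, hjn⟩) :=
          hlow ρ ⟨j, hjn⟩ (by simp only [hρ, ne_eq, Fin.mk.injEq]; omega)
        have hinf_le : A ⟨j, hjn⟩ ⊓ pspan A j ≤ V' ⊓ π ρ := by
          refine le_inf ?_ (inf_le_left.trans inf_le_left)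
          rw [← hE j hjn hjM' (by omega)]
          exact le_inf (inf_le_left.trans inf_le_right)
            (inf_le_right.trans ((hAle j).trans inf_le_right))
        have hmono := Submodule.finrank_mono hinf_le
        omega
  have hchain : delta π r + M ≤ t1 + 1 := by
    have hc1 := hchainstep M (by omega) le_rfl
    have hc2 : finrank F ↥(pspan A M) ≤ finrank F ↥(π ρ ⊓ pspan π (r - 1)) :=
      Submodule.finrank_mono ((hAle M).trans (inf_le_inf le_rfl (pspan_mono π (by omega))))
    have hc3 := delta_spec π hrn'
    rw [show r - 1 + 1 = r by omega, hdim, ← hρ] at hc3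
    omega
  -- bounding the total dimension
  have htot : finrank F ↥(⨆ i, π i) = ∑ i ∈ Finset.range n, delta π (i + 1) := by
    rw [← pspan_top, sum_delta]
  set dr := delta π r with hdr
  have hdr_t2 : dr ≤ t2 := (hanti s r (by omega) (by omega) (by omega)).trans hs
  -- chunk 1
  have hC1 : ∑ i ∈ Finset.Ico 0 M, delta π (i + 1) = k + (M - 1) * t1 := by
    rw [← Finset.sum_Ico_consecutive _ (Nat.zero_le 1) (by omega : 1 ≤ M)]
    have e1 : ∑ i ∈ Finset.Ico 0 1, delta π (i + 1) = k := by
      simp [hd1]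
    have e2 : ∑ i ∈ Finset.Ico 1 M, delta π (i + 1) = (M - 1) * t1 := by
      rw [Finset.sum_congr rfl fun i hi => ?_, Finset.sum_const, Nat.card_Ico, smul_eq_mul]
      simp only [Finset.mem_Ico] at hi
      exact hdelt1 (i + 1) (by omega) (by omega)
    omega
  -- chunk 2
  have hC2 : ∑ i ∈ Finset.Ico M (s - 1), delta π (i + 1) ≤ (s - 1 - M) * (t1 - 1) := by
    calc ∑ i ∈ Finset.Ico M (s - 1), delta π (i + 1)
        ≤ ∑ _i ∈ Finset.Ico M (s - 1), (t1 - 1) := by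
          apply Finset.sum_le_sum
          intro i hi
          simp only [Finset.mem_Ico] at hi
          exact (hanti (M + 1) (i + 1) (by omega) (by omega) (by omega)).trans hdM1
      _ = (s - 1 - M) * (t1 - 1) := by rw [Finset.sum_const, Nat.card_Ico, smul_eq_mul]
  -- chunk 3
  have hC3 : ∑ i ∈ Finset.Ico (s - 1) (r - 1), delta π (i + 1) ≤ (r - s) * t2 := by
    calc ∑ i ∈ Finset.Ico (s - 1) (r - 1), delta π (i + 1)
        ≤ ∑ _i ∈ Finset.Ico (s - 1) (r - 1), t2 := by
          apply Finset.sum_le_sum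
          intro i hi
          simp only [Finset.mem_Ico] at hi
          exact (hanti s (i + 1) (by omega) (by omega) (by omega)).trans hs
      _ = (r - s) * t2 := by
          rw [Finset.sum_const, Nat.card_Ico, smul_eq_mul, show r - 1 - (s - 1) = r - s by omega]
  -- chunk 4
  have hC4 : ∑ i ∈ Finset.Ico (r - 1) n, delta π (i + 1) ≤ (n - r + 1) * dr := by
    calc ∑ i ∈ Finset.Ico (r - 1) n, delta π (i + 1)
        ≤ ∑ _i ∈ Finset.Ico (r - 1) n, dr := by
          apply Finset.sum_le_sum
          intro i hi
          simp only [Finset.mem_Ico] at hi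
          exact hanti r (i + 1) (by omega) (by omega) (by omega)
      _ = (n - r + 1) * dr := by
          rw [Finset.sum_const, Nat.card_Ico, smul_eq_mul, show n - (r - 1) = n - r + 1 by omega]
  have hglue : ∑ i ∈ Finset.range n, delta π (i + 1)
      = ∑ i ∈ Finset.Ico 0 M, delta π (i + 1) + ∑ i ∈ Finset.Ico M (s - 1), delta π (i + 1)
        + ∑ i ∈ Finset.Ico (s - 1) (r - 1), delta π (i + 1)
        + ∑ i ∈ Finset.Ico (r - 1) n, delta π (i + 1) := by
    rw [Finset.range_eq_Ico,
      ← Finset.sum_Ico_consecutive _ (Nat.zero_le M) (by omega : M ≤ n),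
      ← Finset.sum_Ico_consecutive _ (by omega : M ≤ s - 1) (by omega : s - 1 ≤ n),
      ← Finset.sum_Ico_consecutive _ (by omega : s - 1 ≤ r - 1) (by omega : r - 1 ≤ n)]
    ring
  have hbound : finrank F ↥(⨆ i, π i)
      ≤ k + (M - 1) * t1 + (s - 1 - M) * (t1 - 1) + (r - s) * t2 + (n - r + 1) * dr := by
    rw [htot, hglue, hC1]
    omega
  -- final arithmetic
  have hZ : (finrank F ↥(⨆ i, π i) : ℤ)
      ≤ (k : ℤ) + ((M : ℤ) - 1) * t1 + ((s : ℤ) - 1 - M) * ((t1 : ℤ) - 1)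
        + ((r : ℤ) - s) * t2 + ((n : ℤ) - r + 1) * dr := by
    have hb' : (finrank F ↥(⨆ i, π i) : ℤ)
        ≤ ((k + (M - 1) * t1 + (s - 1 - M) * (t1 - 1) + (r - s) * t2 + (n - r + 1) * dr : ℕ) : ℤ) :=
      Nat.cast_le.mpr hbound
    have e1 : ((M - 1 : ℕ) : ℤ) = (M : ℤ) - 1 := by omega
    have e2 : ((s - 1 - M : ℕ) : ℤ) = (s : ℤ) - 1 - M := by omega
    have e3 : ((t1 - 1 : ℕ) : ℤ) = (t1 : ℤ) - 1 := by omega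
    have e4 : ((r - s : ℕ) : ℤ) = (r : ℤ) - s := by omega
    have e5 : ((n - r : ℕ) : ℤ) = (n : ℤ) - r := by omega
    push_cast at hb'
    rw [e1, e2, e3, e4, e5] at hb'
    linarith only [hb']
  clear hnot
  refine hZ.trans ?_
  have q1 : (0:ℤ) ≤ (r : ℤ) - 1 - s := by omega
  have q2 : (0:ℤ) ≤ (t1 : ℤ) - 1 - t2 := by omega
  have q3 : (0:ℤ) ≤ (n : ℤ) - r + 1 := by omega
  have q4 : (0:ℤ) ≤ (t1 : ℤ) + 1 - M - dr := by omega
  have q5 : (0:ℤ) ≤ (n : ℤ) - r := by omega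
  have q6 : (0:ℤ) ≤ (M : ℤ) - 2 := by omega
  linarith only [mul_nonneg q1 q2, mul_nonneg q3 q4, mul_nonneg q5 q6]
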